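/- (Modified Dai–Yuan sufficient descent) Let ζ > 1. Consider the conjugate gradient iteration in which each t_k satisfies the strong Wolfe conditions at x^k along d^k, and suppose that for every k ≥ 1: β_k ≥ 0 and β_k·(ψ_{x^k}(d^{k−1}) − ζ·ψ_{x^{k−1}}(d^{k−1})) ≤ −ψ_{x^k}(v(x^k)) (i.e., β_k is at most the modified Dai–Yuan parameter β_k^{mDY} := −ψ_{x^k}(v(x^k)) / (ψ_{x^k}(d^{k−1}) − ζ·ψ_{x^{k−1}}(d^{k−1})), whose denominator is positive). Then for all k ≥ 0, ψ_{x^k}(d^k) ≤ (ζ/(ζ+σ))·ψ_{x^k}(v(x^k)) < 0; i.e., the sufficient descent condition holds with c = ζ/(ζ+σ). -/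

import Mathlib

open scoped BigOperators

noncomputable def pd (n : ℕ) (F : EuclideanSpace ℝ (Fin n) → ℝ)
    (x : EuclideanSpace ℝ (Fin n)) (j : Fin n) : ℝ :=
  fderiv ℝ F x (EuclideanSpace.single j (1 : ℝ))

noncomputable def glo (n : ℕ) (F H : EuclideanSpace ℝ (Fin n) → ℝ)
    (x : EuclideanSpace ℝ (Fin n)) (j : Fin n) : ℝ :=
  min (pd n F x j) (pd n H x j)

noncomputable def ghi (n : ℕ) (F H : EuclideanSpace ℝ (Fin n) → ℝ)
    (x : EuclideanSpace ℝ (Fin n)) (j : Fin n) : ℝ :=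
  max (pd n F x j) (pd n H x j)

noncomputable def gloVec (n : ℕ) (F H : EuclideanSpace ℝ (Fin n) → ℝ)
    (x : EuclideanSpace ℝ (Fin n)) : EuclideanSpace ℝ (Fin n) :=
  WithLp.toLp 2 (fun j => glo n F H x j)

noncomputable def ghiVec (n : ℕ) (F H : EuclideanSpace ℝ (Fin n) → ℝ)
    (x : EuclideanSpace ℝ (Fin n)) : EuclideanSpace ℝ (Fin n) :=
  WithLp.toLp 2 (fun j => ghi n F H x j)

noncomputable def psi (m n : ℕ) (Gl Gu : Fin m → EuclideanSpace ℝ (Fin n) → ℝ)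
    (x v : EuclideanSpace ℝ (Fin n)) : ℝ :=
  ⨆ i : Fin m, (1 / 2 : ℝ) *
    ((∑ j : Fin n, (glo n (Gl i) (Gu i) x j + ghi n (Gl i) (Gu i) x j) * v j) +
     (∑ j : Fin n, (ghi n (Gl i) (Gu i) x j - glo n (Gl i) (Gu i) x j) * |v j|))

def LevelSet (m n : ℕ) (Gl Gu : Fin m → EuclideanSpace ℝ (Fin n) → ℝ)
    (x0 : EuclideanSpace ℝ (Fin n)) : Set (EuclideanSpace ℝ (Fin n)) :=
  {x | ∀ i : Fin m, Gl i x ≤ Gl i x0 ∧ Gu i x ≤ Gu i x0}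

def StdWolfe (m n : ℕ) (Gl Gu : Fin m → EuclideanSpace ℝ (Fin n) → ℝ)
    (ρ σ : ℝ) (x d : EuclideanSpace ℝ (Fin n)) (t : ℝ) : Prop :=
  (∀ i : Fin m,
      Gl i (x + t • d) ≤ Gl i x + ρ * t * psi m n Gl Gu x d ∧
      Gu i (x + t • d) ≤ Gu i x + ρ * t * psi m n Gl Gu x d) ∧
  σ * psi m n Gl Gu x d ≤ psi m n Gl Gu (x + t • d) d

def StrongWolfe (m n : ℕ) (Gl Gu : Fin m → EuclideanSpace ℝ (Fin n) → ℝ)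
    (ρ σ : ℝ) (x d : EuclideanSpace ℝ (Fin n)) (t : ℝ) : Prop :=
  (∀ i : Fin m,
      Gl i (x + t • d) ≤ Gl i x + ρ * t * psi m n Gl Gu x d ∧
      Gu i (x + t • d) ≤ Gu i x + ρ * t * psi m n Gl Gu x d) ∧
  |psi m n Gl Gu (x + t • d) d| ≤ σ * |psi m n Gl Gu x d|

def AssumptionA1 (m n : ℕ) (Gl Gu : Fin m → EuclideanSpace ℝ (Fin n) → ℝ)
    (x0 : EuclideanSpace ℝ (Fin n)) : Prop :=
  ∀ i : Fin m, ∃ L : ℝ, 0 < L ∧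
    ∀ y ∈ LevelSet m n Gl Gu x0, ∀ z ∈ LevelSet m n Gl Gu x0,
      ‖gloVec n (Gl i) (Gu i) y - gloVec n (Gl i) (Gu i) z‖ ≤ L * ‖y - z‖ ∧
      ‖ghiVec n (Gl i) (Gu i) y - ghiVec n (Gl i) (Gu i) z‖ ≤ L * ‖y - z‖

def AssumptionA2 (m n : ℕ) (Gl Gu : Fin m → EuclideanSpace ℝ (Fin n) → ℝ)
    (x0 : EuclideanSpace ℝ (Fin n)) : Prop :=
  ∀ y : ℕ → EuclideanSpace ℝ (Fin n),
    (∀ k, y k ∈ LevelSet m n Gl Gu x0) →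
    (∀ (i : Fin m) (k : ℕ), Gl i (y (k+1)) ≤ Gl i (y k) ∧ Gu i (y (k+1)) ≤ Gu i (y k)) →
    ∀ i : Fin m, (∃ Cl : ℝ, ∀ k, Cl ≤ Gl i (y k)) ∧ (∃ Cu : ℝ, ∀ k, Cu ≤ Gu i (y k))

lemma psi_zero' (m n : ℕ) (hm : 0 < m) (Gl Gu : Fin m → EuclideanSpace ℝ (Fin n) → ℝ)
    (x : EuclideanSpace ℝ (Fin n)) : psi m n Gl Gu x 0 = 0 := by
  have : Nonempty (Fin m) := ⟨⟨0, hm⟩⟩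
  unfold psi
  have : ∀ i : Fin m, (1 / 2 : ℝ) *
      ((∑ j : Fin n, (glo n (Gl i) (Gu i) x j + ghi n (Gl i) (Gu i) x j) * (0 : EuclideanSpace ℝ (Fin n)) j) +
       (∑ j : Fin n, (ghi n (Gl i) (Gu i) x j - glo n (Gl i) (Gu i) x j) * |(0 : EuclideanSpace ℝ (Fin n)) j|)) = 0 := by
    intro i
    simp
  simp only [this, ciSup_const]

lemma psi_subadd' (m n : ℕ) (hm : 0 < m) (Gl Gu : Fin m → EuclideanSpace ℝ (Fin n) → ℝ)
    (x v d : EuclideanSpace ℝ (Fin n)) (b : ℝ) (hb : 0 ≤ b) :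
    psi m n Gl Gu x (v + b • d) ≤ psi m n Gl Gu x v + b * psi m n Gl Gu x d := by
  have : Nonempty (Fin m) := ⟨⟨0, hm⟩⟩
  set a : Fin m → Fin n → ℝ := fun i j => glo n (Gl i) (Gu i) x j + ghi n (Gl i) (Gu i) x j
  set bb : Fin m → Fin n → ℝ := fun i j => ghi n (Gl i) (Gu i) x j - glo n (Gl i) (Gu i) x j
  have hbb : ∀ i j, 0 ≤ bb i j := by
    intro i j
    simp only [bb, ghi, glo, sub_nonneg]
    exact min_le_max
  set f : EuclideanSpace ℝ (Fin n) → Fin m → ℝ := fun w i => (1 / 2 : ℝ) *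
      ((∑ j : Fin n, a i j * w j) + (∑ j : Fin n, bb i j * |w j|))
  have hpsi : ∀ w, psi m n Gl Gu x w = ⨆ i, f w i := fun w => rfl
  rw [hpsi, hpsi, hpsi]
  apply ciSup_le
  intro i
  have happ : ∀ j : Fin n, (v + b • d) j = v j + b * d j := by
    intro j; rfl
  have e1 : (∑ j : Fin n, a i j * (v + b • d) j)
      = (∑ j : Fin n, a i j * v j) + b * (∑ j : Fin n, a i j * d j) := by
    rw [Finset.mul_sum, ← Finset.sum_add_distrib]
    refine Finset.sum_congr rfl fun j _ => ?_
    rw [happ j]; ring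
  have e2 : (∑ j : Fin n, bb i j * |(v + b • d) j|)
      ≤ (∑ j : Fin n, bb i j * |v j|) + b * (∑ j : Fin n, bb i j * |d j|) := by
    rw [Finset.mul_sum, ← Finset.sum_add_distrib]
    refine Finset.sum_le_sum fun j _ => ?_
    rw [happ j]
    have habs : |v j + b * d j| ≤ |v j| + b * |d j| := by
      calc |v j + b * d j| ≤ |v j| + |b * d j| := abs_add_le _ _
        _ = |v j| + b * |d j| := by rw [abs_mul, abs_of_nonneg hb]
    nlinarith [hbb i j, abs_nonneg (v j + b * d j)]
  have hfv : f v i ≤ ⨆ i', f v i' := le_ciSup (Set.finite_range _).bddAbove i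
  have hfd : f d i ≤ ⨆ i', f d i' := le_ciSup (Set.finite_range _).bddAbove i
  have : f (v + b • d) i ≤ f v i + b * f d i := by
    simp only [f]; rw [e1]; nlinarith [e2]
  nlinarith [mul_le_mul_of_nonneg_left hfd hb]

theorem mdy_sufficient_descent (m n : ℕ) (hm : 0 < m) (hn : 0 < n)
    (Gl Gu : Fin m → EuclideanSpace ℝ (Fin n) → ℝ)
    (hGl : ∀ i, ContDiff ℝ 1 (Gl i)) (hGu : ∀ i, ContDiff ℝ 1 (Gu i))
    (hle : ∀ (i : Fin m) (x : EuclideanSpace ℝ (Fin n)), Gl i x ≤ Gu i x)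
    (vv : EuclideanSpace ℝ (Fin n) → EuclideanSpace ℝ (Fin n))
    (hvmin : ∀ y w : EuclideanSpace ℝ (Fin n),
      psi m n Gl Gu y (vv y) + (1/2) * ‖vv y‖^2 ≤ psi m n Gl Gu y w + (1/2) * ‖w‖^2)
    (ρ σ : ℝ) (hρ : 0 < ρ) (hρσ : ρ < σ) (hσ : σ < 1)
    (x d : ℕ → EuclideanSpace ℝ (Fin n)) (t : ℕ → ℝ) (β : ℕ → ℝ)
    (hx : ∀ k : ℕ, x (k+1) = x k + t k • d k)
    (ht : ∀ k : ℕ, 0 < t k)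
    (hd0 : d 0 = vv (x 0))
    (hdk : ∀ k : ℕ, d (k+1) = vv (x (k+1)) + β (k+1) • d k)
    (hvne : ∀ k : ℕ, vv (x k) ≠ 0)
    (ζ : ℝ) (hζ : 1 < ζ)
    (hw : ∀ k : ℕ, StrongWolfe m n Gl Gu ρ σ (x k) (d k) (t k))
    (hβ : ∀ k : ℕ, 0 ≤ β (k+1) ∧
      β (k+1) * (psi m n Gl Gu (x (k+1)) (d k) - ζ * psi m n Gl Gu (x k) (d k))
        ≤ -psi m n Gl Gu (x (k+1)) (vv (x (k+1)))) :
    ∀ k : ℕ, psi m n Gl Gu (x k) (d k) ≤ (ζ / (ζ + σ)) * psi m n Gl Gu (x k) (vv (x k)) ∧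
      (ζ / (ζ + σ)) * psi m n Gl Gu (x k) (vv (x k)) < 0 := by
  have hσ0 : 0 < σ := lt_trans hρ hρσ
  have hsum : 0 < ζ + σ := by linarith
  -- psi at v(x) is negative
  have hVneg : ∀ y : EuclideanSpace ℝ (Fin n), vv y ≠ 0 → psi m n Gl Gu y (vv y) < 0 := by
    intro y hy
    have h0 := hvmin y 0
    rw [psi_zero' m n hm Gl Gu y] at h0
    have hnorm : (0:ℝ) < ‖vv y‖^2 := by
      have := norm_pos_iff.mpr hy
      positivity
    simp only [norm_zero] at h0
    nlinarith
  intro k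
  induction k with
  | zero =>
    have hV := hVneg (x 0) (hvne 0)
    rw [hd0]
    constructor
    · rw [div_mul_eq_mul_div, le_div_iff₀ hsum]
      nlinarith
    · exact mul_neg_of_pos_of_neg (by positivity) hV
  | succ k ih =>
    obtain ⟨ihd, ihneg⟩ := ih
    have hP : psi m n Gl Gu (x k) (d k) < 0 := lt_of_le_of_lt ihd ihneg
    have hV : psi m n Gl Gu (x (k+1)) (vv (x (k+1))) < 0 := hVneg _ (hvne (k+1))
    set P := psi m n Gl Gu (x k) (d k)
    set V := psi m n Gl Gu (x (k+1)) (vv (x (k+1)))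
    set A := psi m n Gl Gu (x (k+1)) (d k) with hA
    -- Wolfe condition 2
    have hW2 : |A| ≤ σ * |P| := by
      have h := (hw k).2
      rw [hA, hx k]
      exact h
    have hA1 : A ≤ -σ * P := by
      have h1 : A ≤ |A| := le_abs_self A
      have h2 : |P| = -P := abs_of_neg hP
      nlinarith
    obtain ⟨hβ0, hβ2⟩ := hβ k
    -- sublinearity
    have hsub : psi m n Gl Gu (x (k+1)) (d (k+1)) ≤ V + β (k+1) * A := by
      rw [hdk k]
      exact psi_subadd' m n hm Gl Gu (x (k+1)) _ _ _ hβ0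
    -- key inequality : (σ+ζ) * (β A) ≤ -σ V
    have hkey : (σ + ζ) * (β (k+1) * A) ≤ -σ * V := by
      have h1 : β (k+1) * (A - ζ * P) ≤ -V := hβ2
      have h2 : β (k+1) * (A + σ * P) ≤ 0 :=
        mul_nonpos_of_nonneg_of_nonpos hβ0 (by linarith)
      nlinarith
    constructor
    · rw [div_mul_eq_mul_div, le_div_iff₀ hsum]
      nlinarith
    · exact mul_neg_of_pos_of_neg (by positivity) hV
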